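/- Let Σ = {g ∈ SL(6,ℤ) : g(e₁) = ±e₁} ⊂ SL(6,ℤ). The subgroup Σᵀ = {gᵀ : g ∈ Σ} is not conjugate to Σ inside GL(6,ℤ). -/

import Mathlib

open Matrix

def e1 : Fin 6 → ℤ := fun j => if j = 0 then 1 else 0

/-- `Σ = {g ∈ SL(6,ℤ) : g e₁ = ±e₁}`, as a set of matrices. -/
def SigMatSet : Set (Matrix (Fin 6) (Fin 6) ℤ) :=
  {g | g.det = 1 ∧ (g.mulVec e1 = e1 ∨ g.mulVec e1 = -e1)}

lemma stdBasisMatrix_mulVec (i j : Fin 6) (c : ℤ) (v : Fin 6 → ℤ) :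
    (single i j c).mulVec v = fun k => if k = i then c * v j else 0 := by
  ext k
  by_cases h : k = i
  · simp [Matrix.mulVec, dotProduct, single, ite_and, h]
  · simp [Matrix.mulVec, dotProduct, single, ite_and, h, Ne.symm h]

lemma transvection_transpose (i j : Fin 6) (c : ℤ) :
    (transvection i j c)ᵀ = transvection j i c := by
  ext a b
  simp [transvection, single, Matrix.one_apply, and_comm, eq_comm]

theorem stmt_6 :
    ¬ ∃ B : Matrix.GeneralLinearGroup (Fin 6) ℤ,
      (fun g => B.1 * g * (B⁻¹).1) '' (Matrix.transpose '' SigMatSet) = SigMatSet := by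
  rintro ⟨B, hB⟩
  set w : Fin 6 → ℤ := (B⁻¹).1.mulVec e1 with hw
  have hBw : B.1.mulVec w = e1 := by
    rw [hw, mulVec_mulVec]
    rw [B.mul_inv, one_mulVec]
  -- key claim: for i ≠ 0, i ≠ j, w j = 0
  have key : ∀ i j : Fin 6, i ≠ 0 → i ≠ j → w j = 0 := by
    intro i j hi0 hij
    -- h = transvection j i 1 ∈ SigMatSet
    have hmem : transvection j i 1 ∈ SigMatSet := by
      constructor
      · exact det_transvection_of_ne j i (Ne.symm hij) 1
      · left
        rw [transvection, add_mulVec, one_mulVec, stdBasisMatrix_mulVec]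
        have : e1 i = 0 := by simp [e1, hi0]
        ext k
        simp [this]
    have hgmem : B.1 * (transvection i j 1) * (B⁻¹).1 ∈ SigMatSet := by
      rw [← hB]
      exact ⟨(transvection j i 1)ᵀ, ⟨transvection j i 1, hmem, rfl⟩,
        by rw [transvection_transpose]⟩
    obtain ⟨-, hcase⟩ := hgmem
    have hcomp : (B.1 * (transvection i j 1) * (B⁻¹).1).mulVec e1
        = B.1.mulVec ((transvection i j 1).mulVec w) := by
      rw [hw, mulVec_mulVec, mulVec_mulVec, Matrix.mul_assoc]
    have hBinj : Function.Injective (fun x => B.1.mulVec x) := by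
      intro x y hxy
      have hxy' : B.1.mulVec x = B.1.mulVec y := hxy
      have h2 : (B⁻¹).1.mulVec (B.1.mulVec x) = (B⁻¹).1.mulVec (B.1.mulVec y) := by rw [hxy']
      rwa [mulVec_mulVec, mulVec_mulVec, B.inv_mul, one_mulVec, one_mulVec] at h2
    have htv : (transvection i j 1).mulVec w =
        fun k => w k + if k = i then w j else 0 := by
      rw [transvection, add_mulVec, one_mulVec, stdBasisMatrix_mulVec]
      ext k; simp
    rcases hcase with hc | hc
    · -- g w = w
      have : (transvection i j 1).mulVec w = w := by
        apply hBinj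
        rw [hcomp] at hc
        show B.1.mulVec _ = B.1.mulVec _
        rw [hc, hBw]
      have := congrFun (htv ▸ this) i
      simpa using this
    · -- g w = -w
      have hneg : (transvection i j 1).mulVec w = -w := by
        apply hBinj
        rw [hcomp] at hc
        show B.1.mulVec _ = B.1.mulVec _
        rw [hc, Matrix.mulVec_neg, hBw]
      have h1 := congrFun (htv ▸ hneg) i
      simp only [if_pos rfl, Pi.neg_apply] at h1
      -- w i + w j = -w i
      -- also evaluate at some k ≠ i : w k = -w k so w k = 0; in particular w j = 0 since j ≠ i
      have h2 := congrFun (htv ▸ hneg) j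
      simp only [if_neg (Ne.symm hij), Pi.neg_apply, add_zero] at h2
      omega
  have hw0 : w = 0 := by
    ext j
    by_cases hj : j = 1
    · exact key 2 j (by decide) (by rw [hj]; decide)
    · exact key 1 j (by decide) (Ne.symm hj)
  rw [hw0] at hBw
  have := congrFun hBw 0
  simp [Matrix.mulVec_zero, e1] at this
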